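/- arXiv:1909.05375 — 3 statements merged into one kernel-verified Lean document; each statement's English description precedes it below -/
import Mathlib

section
/- Let (l_n) and (k_n) be sequences of positive integers such that (1 − 2^{−l_n})^{k_n} → 1 and k_n · l_n · 2^{−l_n} → ∞ as n → ∞. Define f_n : {-1,1}^{[k_n]×[l_n]} → {−1,0,1} by f_n(ω) = Tribes(l_n,k_n)(ω) − Tribes(l_n,k_n)(−ω). Then, with ω uniform: (i) ℙ[f_n(ω) = 0] → 1; (ii) there is a sequence of positive integers a_n → ∞ such that ℙ[ f_n(ω) = 0 and |{(t,i) : f_n(ω^{(t,i)}) = 1}| > a_n and |{(t,i) : f_n(ω^{(t,i)}) = −1}| > a_n ] → 1, where ω^{(t,i)} denotes ω with coordinate (t,i) flipped. -/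
open Finset Filter

attribute [local instance] Classical.propDecidable

/-- The discrete hypercube indexed by `ι`: `true` encodes `+1`, `false` encodes `-1`
(so the pointwise `Bool` order, with `false < true`, is the coordinatewise partial
order on `{-1,1}^ι` with `-1 < 1`). -/
abbrev Cube (ι : Type) := ι → Bool

/-- `ω` with its `i`-th coordinate flipped. -/
def flipAt {ι : Type} [DecidableEq ι] (ω : Cube ι) (i : ι) : Cube ι :=
  fun j => if j = i then !ω j else ω j

/-- The pivotal set `𝒫(f, ω)`: coordinates whose flip changes the value of `f`. -/
noncomputable def pivSet {ι : Type} [DecidableEq ι] [Fintype ι] {β : Type}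
    (f : Cube ι → β) (ω : Cube ι) : Finset ι :=
  Finset.univ.filter fun i => f (flipAt ω i) ≠ f ω

/-- Probability of the event `p` under the uniform measure on the hypercube. -/
noncomputable def unifProb {ι : Type} [DecidableEq ι] [Fintype ι] (p : Cube ι → Prop) : ℝ :=
  ((Finset.univ.filter p).card : ℝ) / (Fintype.card (Cube ι) : ℝ)

/-- Expectation of `X` under the uniform measure on the hypercube. -/
noncomputable def unifExp {ι : Type} [DecidableEq ι] [Fintype ι] (X : Cube ι → ℝ) : ℝ :=
  (∑ ω : Cube ι, X ω) / (Fintype.card (Cube ι) : ℝ)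

/-- Conditional expectation of `X` given the event `A`, under the uniform measure. -/
noncomputable def condExpect {ι : Type} [DecidableEq ι] [Fintype ι]
    (X : Cube ι → ℝ) (A : Cube ι → Prop) : ℝ :=
  (∑ ω ∈ Finset.univ.filter A, X ω) / ((Finset.univ.filter A).card : ℝ)

/-- `Tribes(l,k)` as a `{0,1}`-valued integer function on `{-1,1}^{[k]×[l]}`:
value `1` iff some tribe `t ∈ [k]` has all of its `l` bits equal to `+1` (`true`). -/
noncomputable def tribes (k l : ℕ) (ω : Cube (Fin k × Fin l)) : ℤ :=
  if ∃ t : Fin k, ∀ i : Fin l, ω (t, i) = true then 1 else 0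

/-- Coordinatewise negation `-ω`. -/
def negCube {ι : Type} (ω : Cube ι) : Cube ι := fun x => !ω x

/-- The number of pivotal tribes: tribes having exactly one `-1` (`false`) bit. -/
noncomputable def pivTribeCount (k l : ℕ) (ω : Cube (Fin k × Fin l)) : ℕ :=
  (Finset.univ.filter fun t : Fin k => ∃! i : Fin l, ω (t, i) = false).card

/-- Single-coordinate weight of the `ε`-noise joint distribution `ν_ε`. -/
noncomputable def noiseWeight (ε : ℝ) (b b' : Bool) : ℝ :=
  if b = b' then (1 - ε / 2) / 2 else ε / 4

/-- Probability of the event `E` under the `ε`-noise joint distribution `ν_ε`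
(the product over coordinates of the single-coordinate weights). -/
noncomputable def noiseProb {ι : Type} [DecidableEq ι] [Fintype ι] (ε : ℝ)
    (E : Cube ι → Cube ι → Prop) : ℝ :=
  ∑ ω : Cube ι, ∑ ω' : Cube ι,
    if E ω ω' then ∏ i : ι, noiseWeight ε (ω i) (ω' i) else 0

/-- `f` is transitive: it is invariant under some subgroup of permutations of the
coordinate set acting transitively, where `(σ · ω) x = ω (σ⁻¹ x)`. -/
def TransitiveInvariant {ι : Type} {β : Type} (f : Cube ι → β) : Prop :=
  ∃ G : Subgroup (Equiv.Perm ι),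
    (∀ x y : ι, ∃ σ ∈ G, σ x = y) ∧
    ∀ σ ∈ G, ∀ ω : Cube ι, f (fun x => ω (σ⁻¹ x)) = f ω


section Aux

lemma cube_card (ι : Type) [Fintype ι] [DecidableEq ι] :
    Fintype.card (Cube ι) = 2 ^ Fintype.card ι := by
  simp [Cube]

lemma cube_card_pos (ι : Type) [Fintype ι] [DecidableEq ι] :
    (0:ℝ) < (Fintype.card (Cube ι) : ℝ) := by
  have : 0 < Fintype.card (Cube ι) := Fintype.card_pos
  exact_mod_cast this

variable {ι : Type} [DecidableEq ι] [Fintype ι]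

lemma unifProb_eq (p : Cube ι → Prop) [DecidablePred p] :
    unifProb p = ((Finset.univ.filter p).card : ℝ) / (Fintype.card (Cube ι) : ℝ) := by
  unfold unifProb
  congr!

lemma unifProb_nonneg (p : Cube ι → Prop) : 0 ≤ unifProb p :=
  div_nonneg (by positivity) (by positivity)

lemma unifProb_le_one (p : Cube ι → Prop) : unifProb p ≤ 1 := by
  rw [unifProb, div_le_one (cube_card_pos ι)]
  exact_mod_cast Finset.card_filter_le _ _

lemma unifProb_compl (p : Cube ι → Prop) :
    unifProb (fun ω => ¬ p ω) = 1 - unifProb p := by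
  classical
  have key : (Finset.univ.filter p).card + (Finset.univ.filter (fun ω => ¬ p ω)).card
      = Fintype.card (Cube ι) := by
    simpa using Finset.card_filter_add_card_filter_not (s := Finset.univ) (p := p)
  have h0 := ne_of_gt (cube_card_pos ι)
  rw [unifProb_eq, unifProb_eq, eq_sub_iff_add_eq, ← add_div,
    div_eq_one_iff_eq h0, ← Nat.cast_add]
  norm_cast
  rw [add_comm]
  exact key

lemma unifProb_mono {p q : Cube ι → Prop} (h : ∀ ω, p ω → q ω) :
    unifProb p ≤ unifProb q := by
  classical
  rw [unifProb_eq, unifProb_eq]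
  have hcard : (Finset.univ.filter p).card ≤ (Finset.univ.filter q).card :=
    Finset.card_le_card (Finset.monotone_filter_right _ (fun ω _ => h ω))
  exact div_le_div_of_nonneg_right (by exact_mod_cast hcard) (le_of_lt (cube_card_pos ι))

lemma unifProb_or_le (p q : Cube ι → Prop) :
    unifProb (fun ω => p ω ∨ q ω) ≤ unifProb p + unifProb q := by
  classical
  rw [unifProb_eq, unifProb_eq, unifProb_eq, ← add_div]
  have hsub : (Finset.univ.filter (fun ω => p ω ∨ q ω)) ⊆
      (Finset.univ.filter p) ∪ (Finset.univ.filter q) := by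
    intro ω hω
    simp only [Finset.mem_filter, Finset.mem_union, Finset.mem_univ, true_and] at *
    exact hω
  have hN : (Finset.univ.filter (fun ω => p ω ∨ q ω)).card ≤
      (Finset.univ.filter p).card + (Finset.univ.filter q).card :=
    (Finset.card_le_card hsub).trans (Finset.card_union_le _ _)
  exact div_le_div_of_nonneg_right (by exact_mod_cast hN) (le_of_lt (cube_card_pos ι))

lemma unifProb_congr {p q : Cube ι → Prop} (h : ∀ ω, p ω ↔ q ω) :
    unifProb p = unifProb q :=
  le_antisymm (unifProb_mono fun ω => (h ω).1) (unifProb_mono fun ω => (h ω).2)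

omit [DecidableEq ι] [Fintype ι] in
lemma negCube_negCube (ω : Cube ι) : negCube (negCube ω) = ω := by
  funext x; simp [negCube]

lemma unifProb_comp_neg (p : Cube ι → Prop) :
    unifProb (fun ω => p (negCube ω)) = unifProb p := by
  classical
  rw [unifProb_eq, unifProb_eq]
  congr 1
  norm_cast
  apply Finset.card_bij' (fun ω _ => negCube ω) (fun ω _ => negCube ω)
  · intro ω hω
    simp only [Finset.mem_filter, Finset.mem_univ, true_and] at *
    exact hω
  · intro ω hω
    simp only [Finset.mem_filter, Finset.mem_univ, true_and] at *
    simpa [negCube_negCube] using hω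
  · intro ω _; exact negCube_negCube ω
  · intro ω _; exact negCube_negCube ω

end Aux

section Count

variable {k l : ℕ}

lemma count_pi (Q : Fin k → (Fin l → Bool) → Prop) :
    (Finset.univ.filter fun ω : Cube (Fin k × Fin l) => ∀ t, Q t (fun i => ω (t, i))).card
      = ∏ t, (Finset.univ.filter (Q t)).card := by
  classical
  rw [← Fintype.card_subtype]
  have : ∀ t, (Finset.univ.filter (Q t)).card = Fintype.card {g : Fin l → Bool // Q t g} :=
    fun t => (Fintype.card_subtype _).symm
  rw [Finset.prod_congr rfl (fun t _ => this t), ← Fintype.card_pi]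
  exact Fintype.card_congr
    (((Equiv.curry (Fin k) (Fin l) Bool).subtypeEquiv (fun ω => Iff.rfl)).trans
      (Equiv.subtypePiEquivPi))

lemma card_true_fun : (Finset.univ.filter fun g : Fin l → Bool => ∀ i, g i = true).card = 1 := by
  classical
  rw [Finset.card_eq_one]
  refine ⟨fun _ => true, ?_⟩
  ext g
  simp only [Finset.mem_filter, Finset.mem_univ, true_and, Finset.mem_singleton]
  constructor
  · intro h; funext i; exact h i
  · intro h i; rw [h]

lemma card_fun_bool : (Finset.univ : Finset (Fin l → Bool)).card = 2 ^ l := by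
  classical
  simp [Finset.card_univ]

lemma card_not_true_fun :
    (Finset.univ.filter fun g : Fin l → Bool => ¬ ∀ i, g i = true).card = 2 ^ l - 1 := by
  classical
  have key := Finset.card_filter_add_card_filter_not
    (s := (Finset.univ : Finset (Fin l → Bool))) (p := fun g => ∀ i, g i = true)
  rw [card_fun_bool, card_true_fun] at key
  exact Nat.eq_sub_of_add_eq' key

lemma card_one_false :
    (Finset.univ.filter fun g : Fin l → Bool => ∃! i, g i = false).card = l := by
  classical
  have himg : (Finset.univ.filter fun g : Fin l → Bool => ∃! i, g i = false)
      = Finset.univ.image (fun i : Fin l => (fun j => decide (j ≠ i) : Fin l → Bool)) := by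
    ext g
    simp only [Finset.mem_filter, Finset.mem_univ, true_and, Finset.mem_image]
    constructor
    · rintro ⟨i, hi, huniq⟩
      refine ⟨i, ?_⟩
      funext j
      by_cases hji : j = i
      · subst hji; simpa using hi
      · have hne : g j ≠ false := fun hf => hji (huniq j hf)
        have : g j = true := by revert hne; cases g j <;> simp
        simp [hji, this]
    · rintro ⟨i, rfl⟩
      refine ⟨i, by simp, fun j hj => ?_⟩
      by_contra hji
      simp [hji] at hj
  have hinj : Function.Injective (fun i : Fin l => (fun j => decide (j ≠ i) : Fin l → Bool)) := by
    intro i i' hii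
    have := congrFun hii i
    simp at this
    exact this
  rw [himg, Finset.card_image_of_injective _ hinj, Finset.card_univ, Fintype.card_fin]

end Count
section Count2

variable {k l : ℕ}

lemma count_pi_subset (S : Finset (Fin k)) (P : (Fin l → Bool) → Prop) :
    (Finset.univ.filter fun ω : Cube (Fin k × Fin l) => ∀ t ∈ S, P (fun i => ω (t, i))).card
      = (Finset.univ.filter P).card ^ S.card * (2 ^ l) ^ (k - S.card) := by
  classical
  have h2 := count_pi (fun t => fun g : Fin l → Bool => t ∈ S → P g)
  refine Eq.trans ?_ (h2.trans ?_)
  · congr!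
  refine (Finset.prod_congr rfl fun t _ =>
      (?_ : _ = if t ∈ S then (Finset.univ.filter P).card else 2 ^ l)).trans ?_
  · by_cases ht : t ∈ S
    · rw [if_pos ht]
      congr 1
      ext g
      simp [ht]
    · rw [if_neg ht, ← card_fun_bool (l := l)]
      congr 1
      ext g
      simp [ht]
  rw [Finset.prod_ite, Finset.prod_const, Finset.prod_const]
  congr 1
  · congr 1
    rw [Finset.filter_univ_mem]
  · congr 1
    have : (Finset.univ.filter fun t : Fin k => ¬ t ∈ S) = Sᶜ := by
      ext t; simp
    rw [this, Finset.card_compl, Fintype.card_fin]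

lemma card_single_tribe (t : Fin k) :
    (Finset.univ.filter fun ω : Cube (Fin k × Fin l) => ∃! i, ω (t, i) = false).card
      = l * (2 ^ l) ^ (k - 1) := by
  classical
  have h1 : (Finset.univ.filter fun ω : Cube (Fin k × Fin l) => ∃! i, ω (t, i) = false)
      = (Finset.univ.filter fun ω : Cube (Fin k × Fin l) =>
          ∀ t' ∈ ({t} : Finset (Fin k)), (∃! i, ω (t', i) = false)) := by
    apply Finset.filter_congr
    intro ω _
    simp
  rw [h1, count_pi_subset ({t} : Finset (Fin k)) (fun g => ∃! i, g i = false),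
    card_one_false, Finset.card_singleton, pow_one]

lemma card_pair_tribe {t t' : Fin k} (h : t ≠ t') :
    (Finset.univ.filter fun ω : Cube (Fin k × Fin l) =>
        (∃! i, ω (t, i) = false) ∧ (∃! i, ω (t', i) = false)).card
      = l ^ 2 * (2 ^ l) ^ (k - 2) := by
  classical
  have h1 : (Finset.univ.filter fun ω : Cube (Fin k × Fin l) =>
        (∃! i, ω (t, i) = false) ∧ (∃! i, ω (t', i) = false))
      = (Finset.univ.filter fun ω : Cube (Fin k × Fin l) =>
          ∀ s ∈ ({t, t'} : Finset (Fin k)), (∃! i, ω (s, i) = false)) := by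
    apply Finset.filter_congr
    intro ω _
    simp [Finset.forall_mem_insert]
  rw [h1, count_pi_subset ({t, t'} : Finset (Fin k)) (fun g => ∃! i, g i = false),
    card_one_false, Finset.card_pair h]

lemma sum_piv : ∑ ω : Cube (Fin k × Fin l), pivTribeCount k l ω
    = k * (l * (2 ^ l) ^ (k - 1)) := by
  classical
  unfold pivTribeCount
  simp only [Finset.card_filter]
  rw [Finset.sum_comm]
  have h : ∀ t : Fin k,
      (∑ ω : Cube (Fin k × Fin l), if (∃! i, ω (t, i) = false) then 1 else 0)
      = l * (2 ^ l) ^ (k - 1) := by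
    intro t
    rw [← Finset.card_filter]
    exact card_single_tribe t
  rw [Finset.sum_congr rfl (fun t _ => h t), Finset.sum_const, Finset.card_univ,
    Fintype.card_fin, smul_eq_mul]

lemma sum_piv_sq : ∑ ω : Cube (Fin k × Fin l), (pivTribeCount k l ω) ^ 2
    = k * (l * (2 ^ l) ^ (k - 1)) + (k * (k - 1)) * (l ^ 2 * (2 ^ l) ^ (k - 2)) := by
  classical
  unfold pivTribeCount
  simp only [Finset.card_filter, sq]
  have step1 : ∀ ω : Cube (Fin k × Fin l),
      ((∑ t : Fin k, if (∃! i, ω (t, i) = false) then 1 else 0) *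
       (∑ t : Fin k, if (∃! i, ω (t, i) = false) then 1 else 0) : ℕ)
      = ∑ t : Fin k, ∑ t' : Fin k,
          if ((∃! i, ω (t, i) = false) ∧ (∃! i, ω (t', i) = false)) then 1 else 0 := by
    intro ω
    rw [Finset.sum_mul_sum]
    congr 1; funext t; congr 1; funext t'
    by_cases h1 : (∃! i, ω (t, i) = false) <;> by_cases h2 : (∃! i, ω (t', i) = false) <;>
      simp [h1, h2]
  rw [Finset.sum_congr rfl (fun ω _ => step1 ω), Finset.sum_comm]
  have hswap : ∀ t : Fin k,
      (∑ ω : Cube (Fin k × Fin l), ∑ t' : Fin k,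
        if ((∃! i, ω (t, i) = false) ∧ (∃! i, ω (t', i) = false)) then 1 else 0)
      = ∑ t' : Fin k, ∑ ω : Cube (Fin k × Fin l),
        if ((∃! i, ω (t, i) = false) ∧ (∃! i, ω (t', i) = false)) then 1 else 0 :=
    fun t => Finset.sum_comm
  rw [Finset.sum_congr rfl (fun t _ => hswap t)]
  have hinner : ∀ t t' : Fin k,
      (∑ ω : Cube (Fin k × Fin l),
        if ((∃! i, ω (t, i) = false) ∧ (∃! i, ω (t', i) = false)) then 1 else 0)
      = if t' = t then l * (2 ^ l) ^ (k - 1) else l ^ 2 * (2 ^ l) ^ (k - 2) := by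
    intro t t'
    rw [← Finset.card_filter]
    by_cases htt : t' = t
    · subst htt
      rw [if_pos rfl, ← card_single_tribe t']
      congr 1
      apply Finset.filter_congr
      intro ω _
      simp [and_self]
    · rw [if_neg htt]
      exact card_pair_tribe (fun hh => htt hh.symm)
  rw [Finset.sum_congr rfl (fun t _ => Finset.sum_congr rfl (fun t' _ => hinner t t'))]
  have hrow : ∀ t : Fin k,
      (∑ t' : Fin k, if t' = t then l * (2 ^ l) ^ (k - 1) else l ^ 2 * (2 ^ l) ^ (k - 2))
      = l * (2 ^ l) ^ (k - 1) + (k - 1) * (l ^ 2 * (2 ^ l) ^ (k - 2)) := by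
    intro t
    rw [Finset.sum_ite, Finset.sum_const, Finset.sum_const]
    have e1 : (Finset.univ.filter fun t' : Fin k => t' = t) = {t} := by
      ext s; simp
    have e2 : (Finset.univ.filter fun t' : Fin k => ¬ t' = t) = Finset.univ.erase t := by
      ext s; simp [Finset.mem_erase, and_comm]
    rw [e1, e2, Finset.card_singleton, Finset.card_erase_of_mem (Finset.mem_univ t),
      Finset.card_univ, Fintype.card_fin, one_smul, smul_eq_mul]
  rw [Finset.sum_congr rfl (fun t _ => hrow t), Finset.sum_const, Finset.card_univ,
    Fintype.card_fin, smul_eq_mul, Nat.mul_add, ← Nat.mul_assoc]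
  ring

end Count2
section Cheb

lemma cheb {α : Type} [Fintype α] (X : α → ℕ) (μ : ℝ) (a : ℕ) (ha : (a:ℝ) < μ) :
    ((Finset.univ.filter fun ω : α => X ω ≤ a).card : ℝ) * (μ - (a:ℝ))^2
      ≤ ∑ ω : α, ((X ω : ℝ) - μ)^2 := by
  have h1 : ∀ ω ∈ Finset.univ.filter (fun ω : α => X ω ≤ a),
      (μ - (a:ℝ))^2 ≤ ((X ω:ℝ) - μ)^2 := by
    intro ω hω
    rw [Finset.mem_filter] at hω
    have hXa : (X ω : ℝ) ≤ (a:ℝ) := by exact_mod_cast hω.2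
    have h2 : μ - (a:ℝ) ≤ μ - (X ω:ℝ) := by linarith
    have h3 : (0:ℝ) ≤ μ - (a:ℝ) := by linarith
    calc (μ - (a:ℝ))^2 ≤ (μ - (X ω:ℝ))^2 := pow_le_pow_left₀ h3 h2 2
      _ = ((X ω:ℝ) - μ)^2 := by ring
  calc ((Finset.univ.filter fun ω : α => X ω ≤ a).card : ℝ) * (μ - (a:ℝ))^2
      = ∑ _ω ∈ Finset.univ.filter (fun ω : α => X ω ≤ a), (μ - (a:ℝ))^2 := by
        rw [Finset.sum_const, nsmul_eq_mul]
    _ ≤ ∑ ω ∈ Finset.univ.filter (fun ω : α => X ω ≤ a), ((X ω:ℝ) - μ)^2 :=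
        Finset.sum_le_sum h1
    _ ≤ ∑ ω : α, ((X ω:ℝ) - μ)^2 :=
        Finset.sum_le_sum_of_subset_of_nonneg (Finset.filter_subset _ _)
          (fun ω _ _ => sq_nonneg _)

variable {k l : ℕ}

lemma cube_card_kl : (Fintype.card (Cube (Fin k × Fin l)) : ℝ) = (2:ℝ) ^ (k * l) := by
  rw [cube_card]
  push_cast
  rw [Fintype.card_prod, Fintype.card_fin, Fintype.card_fin]

lemma var_bound (hk : 0 < k) (hl : 0 < l) :
    ∑ ω : Cube (Fin k × Fin l),
        ((pivTribeCount k l ω : ℝ) - (k:ℝ) * (l:ℝ) * (1/2:ℝ)^l)^2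
      ≤ (Fintype.card (Cube (Fin k × Fin l)) : ℝ) * ((k:ℝ) * (l:ℝ) * (1/2:ℝ)^l) := by
  obtain ⟨k', rfl⟩ : ∃ k', k = k' + 1 := ⟨k - 1, by omega⟩
  set μ : ℝ := ((k' + 1 : ℕ):ℝ) * (l:ℝ) * (1/2:ℝ)^l with hμ
  set N : ℝ := (Fintype.card (Cube (Fin (k' + 1) × Fin l)) : ℝ) with hN
  have hNval : N = (2:ℝ) ^ ((k' + 1) * l) := cube_card_kl
  have hNμ : N * μ = ((k' + 1 : ℕ) : ℝ) * ((l:ℝ) * ((2:ℝ)^l) ^ k') := by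
    rw [hNval, hμ]
    have : (2:ℝ) ^ ((k' + 1) * l) = (2:ℝ)^l * ((2:ℝ)^l)^k' := by
      rw [← pow_mul, ← pow_add]
      congr 1
      ring
    rw [this]
    have h2l : ((1:ℝ)/2)^l = ((2:ℝ)^l)⁻¹ := by
      rw [one_div, inv_pow]
    rw [h2l]
    field_simp
  have hsum : (∑ ω : Cube (Fin (k' + 1) × Fin l), ((pivTribeCount (k' + 1) l ω : ℝ)))
      = N * μ := by
    rw [hNμ]
    have := sum_piv (k := k' + 1) (l := l)
    have hcast := congrArg (Nat.cast (R := ℝ)) this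
    push_cast at hcast
    rw [hcast]
    norm_num
  have hsumsq : (∑ ω : Cube (Fin (k' + 1) × Fin l), ((pivTribeCount (k' + 1) l ω : ℝ))^2)
      ≤ N * μ + N * μ^2 := by
    have hnat := sum_piv_sq (k := k' + 1) (l := l)
    have hcast := congrArg (Nat.cast (R := ℝ)) hnat
    push_cast at hcast
    rw [hcast]
    have hNμ' : N * μ = ((k':ℝ) + 1) * ((l:ℝ) * ((2:ℝ)^l) ^ k') := by
      rw [hNμ]; push_cast; ring
    have hpair : ((k':ℝ) + 1) * (k':ℝ) * ((l:ℝ)^2 * ((2:ℝ)^l) ^ (k' - 1)) ≤ N * μ^2 := by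
      rcases Nat.eq_zero_or_pos k' with h0 | hpos
      · rw [h0]
        simp only [Nat.cast_zero, mul_zero, zero_mul]
        positivity
      · obtain ⟨k'', rfl⟩ : ∃ k'', k' = k'' + 1 := ⟨k' - 1, by omega⟩
        have hNμ2 : N * μ^2 = ((k'':ℝ) + 1 + 1)^2 * ((l:ℝ)^2 * ((2:ℝ)^l) ^ (k'' + 1 - 1)) := by
          rw [hNval, hμ]
          have hsplit : (2:ℝ)^((k'' + 1 + 1) * l) = ((2:ℝ)^l)^2 * ((2:ℝ)^l)^(k'' + 1 - 1) := by
            rw [← pow_mul, ← pow_mul, ← pow_add]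
            congr 1
            simp only [Nat.add_sub_cancel]
            ring
          rw [hsplit]
          have h2l : ((1:ℝ)/2)^l = ((2:ℝ)^l)⁻¹ := by rw [one_div, inv_pow]
          rw [h2l]
          push_cast
          have h2pos : (0:ℝ) < (2:ℝ)^l := by positivity
          field_simp
        rw [hNμ2]
        have hA : (0:ℝ) ≤ (l:ℝ)^2 * ((2:ℝ)^l) ^ (k'' + 1 - 1) := by positivity
        apply mul_le_mul_of_nonneg_right ?_ hA
        push_cast
        nlinarith [sq_nonneg ((k'':ℝ) + 1)]
    rw [hNμ']
    linarith [hpair]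
  have hexp : ∑ ω : Cube (Fin (k' + 1) × Fin l), ((pivTribeCount (k' + 1) l ω : ℝ) - μ)^2
      = (∑ ω : Cube (Fin (k' + 1) × Fin l), ((pivTribeCount (k' + 1) l ω : ℝ))^2)
        - 2 * μ * (∑ ω : Cube (Fin (k' + 1) × Fin l), ((pivTribeCount (k' + 1) l ω : ℝ)))
        + N * μ^2 := by
    have h1 : ∀ ω ∈ (Finset.univ : Finset (Cube (Fin (k' + 1) × Fin l))),
        ((pivTribeCount (k' + 1) l ω : ℝ) - μ)^2
        = (pivTribeCount (k' + 1) l ω : ℝ)^2 - 2 * μ * (pivTribeCount (k' + 1) l ω : ℝ) + μ^2 :=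
      fun ω _ => by ring
    rw [Finset.sum_congr rfl h1, Finset.sum_add_distrib, Finset.sum_sub_distrib,
      ← Finset.mul_sum, Finset.sum_const, Finset.card_univ, nsmul_eq_mul]
  rw [hexp, hsum]
  have e : 2 * μ * (N * μ) = 2 * (N * μ^2) := by ring
  linarith [hsumsq]

end Cheb
section Prob

variable {k l : ℕ}

lemma tribes_eq_zero (ω : Cube (Fin k × Fin l)) :
    tribes k l ω = 0 ↔ ∀ t, ¬ ∀ i, ω (t, i) = true := by
  rw [tribes]
  split_ifs with h
  · constructor
    · intro h1; norm_num at h1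
    · intro hall
      obtain ⟨t, ht⟩ := h
      exact absurd ht (hall t)
  · simp only [eq_self_iff_true, true_iff]
    exact fun t hall => h ⟨t, hall⟩

lemma tribes_eq_one (ω : Cube (Fin k × Fin l)) :
    tribes k l ω = 1 ↔ ∃ t, ∀ i, ω (t, i) = true := by
  rw [tribes]
  split_ifs with h <;> simp [h]

lemma prob_tribes_zero :
    unifProb (fun ω : Cube (Fin k × Fin l) => tribes k l ω = 0)
      = (1 - (1/2:ℝ)^l)^k := by
  classical
  rw [unifProb_eq]
  have hcard : (Finset.univ.filter fun ω : Cube (Fin k × Fin l) => tribes k l ω = 0).card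
      = (2^l - 1)^k := by
    have h2 := count_pi (k := k) (l := l) (fun _ g => ¬ ∀ i, g i = true)
    refine Eq.trans ?_ (h2.trans ?_)
    · congr! 2
      exact tribes_eq_zero _
    · refine (Finset.prod_congr rfl (fun t _ =>
          (?_ : _ = 2 ^ l - 1))).trans ?_
      · refine Eq.trans ?_ (card_not_true_fun (l := l))
        congr!
      · rw [Finset.prod_const, Finset.card_univ, Fintype.card_fin]
  rw [hcard, cube_card_kl]
  have h1 : (1:ℕ) ≤ 2^l := Nat.one_le_two_pow
  have hcast : (((2^l - 1)^k : ℕ) : ℝ) = ((2:ℝ)^l - 1)^k := by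
    push_cast [h1]
    ring
  rw [hcast, show (2:ℝ)^(k*l) = ((2:ℝ)^l)^k by rw [← pow_mul, mul_comm], ← div_pow]
  congr 1
  have h2pos : (0:ℝ) < (2:ℝ)^l := by positivity
  rw [one_div, inv_pow]
  field_simp

lemma prob_piv_small (hk : 0 < k) (hl : 0 < l) (a : ℕ)
    (ha : (a:ℝ) ≤ (k:ℝ) * (l:ℝ) * (1/2:ℝ)^l / 2) :
    unifProb (fun ω : Cube (Fin k × Fin l) => pivTribeCount k l ω ≤ a)
      ≤ 4 / ((k:ℝ) * (l:ℝ) * (1/2:ℝ)^l) := by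
  classical
  set μ : ℝ := (k:ℝ) * (l:ℝ) * (1/2:ℝ)^l with hμ
  have hkpos : (0:ℝ) < (k:ℝ) := by exact_mod_cast hk
  have hlpos : (0:ℝ) < (l:ℝ) := by exact_mod_cast hl
  have hμpos : 0 < μ := by rw [hμ]; positivity
  have haμ : (a:ℝ) < μ := lt_of_le_of_lt ha (by linarith)
  have hcheb := cheb (pivTribeCount k l) μ a haμ
  have hvar := var_bound (k := k) (l := l) hk hl
  rw [unifProb_eq]
  set N : ℝ := (Fintype.card (Cube (Fin k × Fin l)) : ℝ) with hN
  have hNpos : 0 < N := cube_card_pos _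
  set C : ℝ := ((Finset.univ.filter fun ω : Cube (Fin k × Fin l) =>
    pivTribeCount k l ω ≤ a).card : ℝ) with hC
  have hCnonneg : 0 ≤ C := by rw [hC]; positivity
  have h3 : C * (μ/2)^2 ≤ N * μ := by
    have h4 : (μ/2)^2 ≤ (μ - a)^2 := by
      apply pow_le_pow_left₀ (by positivity) (by linarith)
    nlinarith [hcheb.trans hvar]
  have h5 : C * μ ≤ 4 * N := by
    have h6 : C * μ * μ ≤ 4 * N * μ := by nlinarith [h3]
    exact le_of_mul_le_mul_right h6 hμpos
  rw [div_le_div_iff₀ hNpos hμpos]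
  exact h5

end Prob
section Flip

variable {k l : ℕ}

lemma negCube_flipAt {ι : Type} [DecidableEq ι] (ω : Cube ι) (x : ι) :
    negCube (flipAt ω x) = flipAt (negCube ω) x := by
  funext j
  simp only [negCube, flipAt]
  split_ifs <;> rfl

lemma tribes_flip_zero (ω : Cube (Fin k × Fin l)) (x : Fin k × Fin l)
    (h0 : tribes k l ω = 0) (hx : ω x = true) : tribes k l (flipAt ω x) = 0 := by
  rw [tribes_eq_zero] at h0 ⊢
  intro t hall
  apply h0 t
  intro i
  have hi := hall i
  rw [flipAt] at hi
  by_cases hxe : (t, i) = x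
  · exfalso
    rw [if_pos hxe, hxe, hx] at hi
    simp at hi
  · rw [if_neg hxe] at hi
    exact hi

lemma tribes_flip_one (ω : Cube (Fin k × Fin l)) (t : Fin k) (i : Fin l)
    (hfalse : ω (t, i) = false) (huniq : ∀ j, ω (t, j) = false → j = i) :
    tribes k l (flipAt ω (t, i)) = 1 := by
  rw [tribes_eq_one]
  refine ⟨t, fun j => ?_⟩
  rw [flipAt]
  by_cases hji : (t, j) = (t, i)
  · rw [if_pos hji, hji, hfalse]
    rfl
  · rw [if_neg hji]
    have hji' : j ≠ i := fun h => hji (by rw [h])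
    have hne : ω (t, j) ≠ false := fun hf => hji' (huniq j hf)
    revert hne
    cases ω (t, j) <;> simp

lemma card_flip_one (hl : 0 < l) (ω : Cube (Fin k × Fin l))
    (h0 : tribes k l ω = 0) (h0' : tribes k l (negCube ω) = 0) :
    pivTribeCount k l ω ≤ (Finset.univ.filter fun x : Fin k × Fin l =>
      tribes k l (flipAt ω x) - tribes k l (negCube (flipAt ω x)) = 1).card := by
  classical
  unfold pivTribeCount
  apply Finset.card_le_card_of_injOn
    (fun t => (t, if h : ∃ i, ω (t, i) = false then h.choose else ⟨0, hl⟩))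
  · intro t ht
    rw [Finset.mem_coe, Finset.mem_filter] at ht
    obtain ⟨-, i0, hi0, huniq⟩ := ht
    have hex : ∃ i, ω (t, i) = false := ⟨i0, hi0⟩
    rw [Finset.mem_coe, Finset.mem_filter]
    refine ⟨Finset.mem_univ _, ?_⟩
    simp only [dif_pos hex]
    have hj : ω (t, hex.choose) = false := hex.choose_spec
    have huniq' : ∀ j', ω (t, j') = false → j' = hex.choose := by
      intro j' hj'
      exact (huniq j' hj').trans (huniq hex.choose hj).symm
    have hone : tribes k l (flipAt ω (t, hex.choose)) = 1 :=
      tribes_flip_one ω t hex.choose hj huniq'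
    have hzero : tribes k l (negCube (flipAt ω (t, hex.choose))) = 0 := by
      rw [negCube_flipAt]
      apply tribes_flip_zero _ _ h0'
      simp [negCube, hj]
    rw [hone, hzero]
    norm_num
  · intro t1 _ t2 _ heq
    exact congrArg Prod.fst heq

lemma card_flip_neg_eq (ω : Cube (Fin k × Fin l)) :
    (Finset.univ.filter fun x : Fin k × Fin l =>
      tribes k l (flipAt ω x) - tribes k l (negCube (flipAt ω x)) = -1).card
    = (Finset.univ.filter fun x : Fin k × Fin l =>
      tribes k l (flipAt (negCube ω) x)
        - tribes k l (negCube (flipAt (negCube ω) x)) = 1).card := by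
  classical
  congr 1
  ext x
  simp only [Finset.mem_filter, Finset.mem_univ, true_and]
  rw [← negCube_flipAt, negCube_negCube]
  omega

lemma event_implies (hl : 0 < l) (a : ℕ) (ω : Cube (Fin k × Fin l))
    (h0 : tribes k l ω = 0) (h0' : tribes k l (negCube ω) = 0)
    (hc1 : a < pivTribeCount k l ω) (hc2 : a < pivTribeCount k l (negCube ω)) :
    tribes k l ω - tribes k l (negCube ω) = 0 ∧
    a < (Finset.univ.filter fun x : Fin k × Fin l =>
      tribes k l (flipAt ω x) - tribes k l (negCube (flipAt ω x)) = 1).card ∧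
    a < (Finset.univ.filter fun x : Fin k × Fin l =>
      tribes k l (flipAt ω x) - tribes k l (negCube (flipAt ω x)) = -1).card := by
  refine ⟨by rw [h0, h0', sub_zero], lt_of_lt_of_le hc1 (card_flip_one hl ω h0 h0'), ?_⟩
  rw [card_flip_neg_eq]
  exact lt_of_lt_of_le hc2 (card_flip_one hl (negCube ω) h0' (by rwa [negCube_negCube]))

end Flip
section Master

variable {k l : ℕ}

lemma master (hk : 0 < k) (hl : 0 < l) (a : ℕ)
    (ha : (a:ℝ) ≤ (k:ℝ) * (l:ℝ) * (1/2:ℝ)^l / 2) :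
    1 - (2 * (1 - (1 - (1/2:ℝ)^l)^k) + 8 / ((k:ℝ) * (l:ℝ) * (1/2:ℝ)^l))
      ≤ unifProb (fun ω : Cube (Fin k × Fin l) =>
          tribes k l ω = 0 ∧ tribes k l (negCube ω) = 0 ∧
          a < pivTribeCount k l ω ∧ a < pivTribeCount k l (negCube ω)) := by
  classical
  set q : ℝ := (1 - (1/2:ℝ)^l)^k with hq
  set μ : ℝ := (k:ℝ) * (l:ℝ) * (1/2:ℝ)^l with hμ
  have hcompl := unifProb_compl (fun ω : Cube (Fin k × Fin l) =>
    tribes k l ω = 0 ∧ tribes k l (negCube ω) = 0 ∧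
    a < pivTribeCount k l ω ∧ a < pivTribeCount k l (negCube ω))
  have hchain : unifProb (fun ω : Cube (Fin k × Fin l) =>
      ¬ (tribes k l ω = 0 ∧ tribes k l (negCube ω) = 0 ∧
        a < pivTribeCount k l ω ∧ a < pivTribeCount k l (negCube ω)))
      ≤ (1 - q) + ((1 - q) + (4 / μ + 4 / μ)) := by
    have hm : ∀ ω : Cube (Fin k × Fin l),
        (¬ (tribes k l ω = 0 ∧ tribes k l (negCube ω) = 0 ∧
          a < pivTribeCount k l ω ∧ a < pivTribeCount k l (negCube ω)))
        → (¬ tribes k l ω = 0 ∨ (¬ tribes k l (negCube ω) = 0 ∨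
            (pivTribeCount k l ω ≤ a ∨ pivTribeCount k l (negCube ω) ≤ a))) := by
      intro ω hω
      by_cases c1 : tribes k l ω = 0
      · by_cases c2 : tribes k l (negCube ω) = 0
        · by_cases c3 : a < pivTribeCount k l ω
          · by_cases c4 : a < pivTribeCount k l (negCube ω)
            · exact absurd ⟨c1, c2, c3, c4⟩ hω
            · exact Or.inr (Or.inr (Or.inr (Nat.le_of_not_lt c4)))
          · exact Or.inr (Or.inr (Or.inl (Nat.le_of_not_lt c3)))
        · exact Or.inr (Or.inl c2)
      · exact Or.inl c1
    have hA : unifProb (fun ω : Cube (Fin k × Fin l) => ¬ tribes k l ω = 0) = 1 - q := by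
      rw [unifProb_compl, hq, prob_tribes_zero]
    have hB : unifProb (fun ω : Cube (Fin k × Fin l) => ¬ tribes k l (negCube ω) = 0)
        = 1 - q := by
      rw [unifProb_compl,
        unifProb_comp_neg (fun ω : Cube (Fin k × Fin l) => tribes k l ω = 0), hq,
        prob_tribes_zero]
    have hC : unifProb (fun ω : Cube (Fin k × Fin l) => pivTribeCount k l ω ≤ a)
        ≤ 4 / μ := prob_piv_small hk hl a ha
    have hD : unifProb (fun ω : Cube (Fin k × Fin l) => pivTribeCount k l (negCube ω) ≤ a)
        ≤ 4 / μ := by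
      rw [unifProb_comp_neg (fun ω : Cube (Fin k × Fin l) => pivTribeCount k l ω ≤ a)]
      exact prob_piv_small hk hl a ha
    calc unifProb (fun ω : Cube (Fin k × Fin l) => ¬ _)
        ≤ unifProb (fun ω : Cube (Fin k × Fin l) =>
            ¬ tribes k l ω = 0 ∨ (¬ tribes k l (negCube ω) = 0 ∨
              (pivTribeCount k l ω ≤ a ∨ pivTribeCount k l (negCube ω) ≤ a))) :=
          unifProb_mono hm
      _ ≤ unifProb (fun ω : Cube (Fin k × Fin l) => ¬ tribes k l ω = 0)
            + unifProb (fun ω : Cube (Fin k × Fin l) =>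
                ¬ tribes k l (negCube ω) = 0 ∨
                (pivTribeCount k l ω ≤ a ∨ pivTribeCount k l (negCube ω) ≤ a)) :=
          unifProb_or_le _ _
      _ ≤ _ := by
          refine add_le_add (le_of_eq hA) ?_
          refine le_trans (unifProb_or_le _ _) ?_
          refine add_le_add (le_of_eq hB) ?_
          exact le_trans (unifProb_or_le _ _) (add_le_add hC hD)
  have h8 : 8 / μ = 4 / μ + 4 / μ := by ring
  linarith [hchain, hcompl]

end Master

/-- If `(1 - 2^{-l n})^{k n} → 1` and `k n · l n · 2^{-l n} → ∞`, then for
`f n ω = Tribes(l n, k n)(ω) - Tribes(l n, k n)(-ω)` we have `ℙ[f n = 0] → 1`, and for some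
positive integers `a n → ∞`, with probability tending to `1` simultaneously `f n ω = 0`, more
than `a n` single-coordinate flips push `f n` to `1` and more than `a n` flips push it to `-1`. -/
theorem stmt1 (l k : ℕ → ℕ) (hl : ∀ n, 0 < l n) (hk : ∀ n, 0 < k n)
    (h1 : Tendsto (fun n => (1 - (1 / 2 : ℝ) ^ l n) ^ k n) atTop (nhds 1))
    (h2 : Tendsto (fun n => (k n : ℝ) * (l n : ℝ) * (1 / 2 : ℝ) ^ l n) atTop atTop)
    (f : (n : ℕ) → Cube (Fin (k n) × Fin (l n)) → ℤ)
    (hf : ∀ n ω, f n ω = tribes (k n) (l n) ω - tribes (k n) (l n) (negCube ω)) :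
    Tendsto (fun n => unifProb (fun ω : Cube (Fin (k n) × Fin (l n)) => f n ω = 0))
      atTop (nhds 1) ∧
    ∃ a : ℕ → ℕ, (∀ n, 0 < a n) ∧ Tendsto a atTop atTop ∧
      Tendsto (fun n =>
          unifProb (fun ω : Cube (Fin (k n) × Fin (l n)) =>
            f n ω = 0 ∧
            a n < (Finset.univ.filter fun x : Fin (k n) × Fin (l n) =>
              f n (flipAt ω x) = 1).card ∧
            a n < (Finset.univ.filter fun x : Fin (k n) × Fin (l n) =>
              f n (flipAt ω x) = -1).card))
        atTop (nhds 1) := by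
  classical
  set μ : ℕ → ℝ := fun n => (k n : ℝ) * (l n : ℝ) * (1 / 2 : ℝ) ^ l n with hμdef
  set a : ℕ → ℕ := fun n => ⌊μ n / 4⌋₊ + 1 with hadef
  have hapos : ∀ n, 0 < a n := fun n => Nat.succ_pos _
  have hat : Tendsto a atTop atTop := by
    apply tendsto_atTop_mono (fun n => Nat.le_succ ⌊μ n / 4⌋₊)
    exact tendsto_nat_floor_atTop.comp (h2.atTop_div_const (by norm_num))
  have hev : ∀ᶠ n in atTop, (4:ℝ) ≤ μ n := h2.eventually_ge_atTop 4
  have haμ : ∀ n, (4:ℝ) ≤ μ n → ((a n : ℝ)) ≤ μ n / 2 := by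
    intro n h4
    have hfl : (⌊μ n / 4⌋₊ : ℝ) ≤ μ n / 4 := Nat.floor_le (by linarith)
    have : (a n : ℝ) = (⌊μ n / 4⌋₊ : ℝ) + 1 := by rw [hadef]; push_cast; ring
    rw [this]
    linarith
  set L : ℕ → ℝ := fun n =>
    1 - (2 * (1 - (1 - (1/2:ℝ)^(l n))^(k n)) + 8 / μ n) with hLdef
  have hLt : Tendsto L atTop (nhds 1) := by
    have t2 : Tendsto (fun n => 2 * (1 - (1 - (1/2:ℝ)^(l n))^(k n))) atTop (nhds 0) := by
      have := ((tendsto_const_nhds (x := (1:ℝ)) (f := atTop)).sub h1).const_mul (2:ℝ)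
      simpa using this
    have t3 : Tendsto (fun n => 8 / μ n) atTop (nhds 0) :=
      (tendsto_const_nhds (x := (8:ℝ)) (f := atTop)).div_atTop h2
    have hsub := (tendsto_const_nhds (x := (1:ℝ)) (f := atTop)).sub (t2.add t3)
    simpa only [add_zero, sub_zero] using hsub
  have hkey : ∀ᶠ n in atTop, L n ≤ unifProb
      (fun ω : Cube (Fin (k n) × Fin (l n)) =>
        tribes (k n) (l n) ω = 0 ∧ tribes (k n) (l n) (negCube ω) = 0 ∧
        a n < pivTribeCount (k n) (l n) ω ∧
        a n < pivTribeCount (k n) (l n) (negCube ω)) := by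
    filter_upwards [hev] with n h4
    exact master (hk n) (hl n) (a n) (haμ n h4)
  constructor
  · apply tendsto_of_tendsto_of_tendsto_of_le_of_le' hLt tendsto_const_nhds ?_ ?_
    · filter_upwards [hkey] with n hn
      refine le_trans hn (unifProb_mono ?_)
      intro ω hω
      rw [hf, hω.1, hω.2.1, sub_zero]
    · filter_upwards with n
      exact unifProb_le_one _
  · refine ⟨a, hapos, hat, ?_⟩
    apply tendsto_of_tendsto_of_tendsto_of_le_of_le' hLt tendsto_const_nhds ?_ ?_
    · filter_upwards [hkey] with n hn
      refine le_trans hn (unifProb_mono ?_)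
      intro ω hω
      obtain ⟨e1, e2, e3⟩ := event_implies (hl n) (a n) ω hω.1 hω.2.1 hω.2.2.1 hω.2.2.2
      refine ⟨by rw [hf]; exact e1, ?_, ?_⟩
      · have hset : (Finset.univ.filter fun x : Fin (k n) × Fin (l n) =>
            f n (flipAt ω x) = 1)
            = (Finset.univ.filter fun x : Fin (k n) × Fin (l n) =>
              tribes (k n) (l n) (flipAt ω x)
                - tribes (k n) (l n) (negCube (flipAt ω x)) = 1) := by
          ext x
          simp only [Finset.mem_filter, Finset.mem_univ, true_and, hf]
        rw [hset]
        exact e2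
      · have hset : (Finset.univ.filter fun x : Fin (k n) × Fin (l n) =>
            f n (flipAt ω x) = -1)
            = (Finset.univ.filter fun x : Fin (k n) × Fin (l n) =>
              tribes (k n) (l n) (flipAt ω x)
                - tribes (k n) (l n) (negCube (flipAt ω x)) = -1) := by
          ext x
          simp only [Finset.mem_filter, Finset.mem_univ, true_and, hf]
        rw [hset]
        exact e3
    · filter_upwards with n
      exact unifProb_le_one _
end

section
/- For positive integers l and k with l ≥ 2, let ω be uniform on {-1,1}^{[k]×[l]} and let X(ω) be the number of pivotal tribes. Then the events {Tribes(l,k)(ω) = 1} and {Tribes(l,k)(ω) = 0} both have positive probability, and 𝔼[X | Tribes(l,k)(ω) = 1] ≤ 𝔼[X] ≤ 𝔼[X | Tribes(l,k)(ω) = 0], where 𝔼[X] = k·l·2^{−l}. -/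
open Finset Filter

attribute [local instance] Classical.propDecidable

section stmt8aux

lemma cardPi {ι : Type} [Fintype ι] {T : Type} [Fintype T]
    (p : ι → T → Prop) :
    (univ.filter fun f : ι → T => ∀ i, p i (f i)).card
      = ∏ i, (univ.filter fun x => p i x).card := by
  rw [← Fintype.card_subtype, Fintype.card_congr (Equiv.subtypePiEquivPi (p := p)),
    Fintype.card_pi]
  simp [Fintype.card_subtype]

lemma card_filter_equiv {α β : Type} [Fintype α] [Fintype β] (e : α ≃ β) (p : β → Prop) :
    (univ.filter fun a => p (e a)).card = (univ.filter p).card := by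
  rw [← Fintype.card_subtype, ← Fintype.card_subtype]
  exact Fintype.card_congr (e.subtypeEquiv fun a => Iff.rfl)

lemma pv_card (l : ℕ) :
    (univ.filter fun v : Fin l → Bool => ∃! i, v i = false).card = l := by
  have h : (univ.filter fun v : Fin l → Bool => ∃! i, v i = false)
      = univ.image (fun i : Fin l => Function.update (fun _ => true) i false) := by
    ext v
    simp only [mem_filter, mem_univ, true_and, mem_image]
    constructor
    · rintro ⟨i, hi, hu⟩
      refine ⟨i, ?_⟩
      funext j
      by_cases hj : j = i
      · subst hj; simp [hi]
      · simp only [Function.update, hj]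
        cases hv : v j
        · exact absurd (hu j hv) hj
        · simp [hj]
    · rintro ⟨i, rfl⟩
      refine ⟨i, by simp, fun j hj => ?_⟩
      by_contra hji
      simp [Function.update, hji] at hj
  rw [h, card_image_of_injective _ ?_, card_univ, Fintype.card_fin]
  intro i j hij
  by_contra hne
  have := congrFun hij i
  simp [Function.update, hne] at this

lemma allT_card (l : ℕ) :
    (univ.filter fun v : Fin l → Bool => ∀ i, v i = true).card = 1 := by
  have := cardPi (fun (_ : Fin l) (b : Bool) => b = true)
  calc (univ.filter fun v : Fin l → Bool => ∀ i, v i = true).card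
      = ∏ _i : Fin l, (univ.filter fun b : Bool => b = true).card := by
        convert this using 2 <;> congr!
    _ = 1 := by
        rw [show (univ.filter fun b : Bool => b = true) = {true} from by
          ext b; cases b <;> simp]
        simp

lemma count_one_special {k : ℕ} {T : Type} [Fintype T] (t : Fin k) (q r : T → Prop) :
    (univ.filter fun f : Fin k → T => (∀ s, r (f s)) ∧ q (f t)).card
      = (univ.filter fun v => r v ∧ q v).card * (univ.filter fun v => r v).card ^ (k - 1) := by
  have h1 : (univ.filter fun f : Fin k → T => (∀ s, r (f s)) ∧ q (f t))
      = univ.filter fun f : Fin k → T => ∀ s, r (f s) ∧ (s = t → q (f s)) := by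
    apply Finset.filter_congr
    intro f _
    constructor
    · rintro ⟨hr, hq⟩ s; exact ⟨hr s, fun hs => hs ▸ hq⟩
    · intro h; exact ⟨fun s => (h s).1, (h t).2 rfl⟩
  rw [h1]
  have hcp := cardPi (fun (s : Fin k) (v : T) => r v ∧ (s = t → q v))
  rw [show (univ.filter fun f : Fin k → T => ∀ s, r (f s) ∧ (s = t → q (f s))).card
      = ∏ s, (univ.filter fun v : T => r v ∧ (s = t → q v)).card from by convert hcp using 2 <;> congr!]
  rw [← Finset.mul_prod_erase univ _ (mem_univ t)]
  have ht : (univ.filter fun v : T => r v ∧ (t = t → q v)) = univ.filter fun v => r v ∧ q v := by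
    apply Finset.filter_congr; intro v _; simp
  rw [ht]
  congr 1
  rw [Finset.prod_congr rfl (fun s hs => ?_), Finset.prod_const, card_erase_of_mem (mem_univ t),
    card_univ, Fintype.card_fin]
  have hst : s ≠ t := (mem_erase.mp hs).1
  congr 1
  apply Finset.filter_congr; intro v _; simp [hst]

lemma notAllT_card (l : ℕ) :
    (univ.filter fun v : Fin l → Bool => ¬∀ i, v i = true).card = 2 ^ l - 1 := by
  have h := Finset.card_filter_add_card_filter_not (s := (univ : Finset (Fin l → Bool)))
    (p := fun v => ∀ i, v i = true)
  rw [allT_card] at h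
  have hc : (univ : Finset (Fin l → Bool)).card = 2 ^ l := by
    simp [Finset.card_univ]
  rw [hc] at h
  rw [← h, Nat.add_sub_cancel_left]

lemma pv_notAll {l : ℕ} : ∀ v : Fin l → Bool, (∃! i, v i = false) → ¬∀ i, v i = true := by
  intro v hv hall
  obtain ⟨i, hi, -⟩ := hv
  rw [hall i] at hi; exact Bool.noConfusion hi

-- count of ω with pivotal tribe t
lemma count_piv_t (k l : ℕ) (t : Fin k) :
    (univ.filter fun ω : (Fin k × Fin l → Bool) => ∃! i, ω (t, i) = false).card
      = l * 2 ^ (l * (k - 1)) := by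
  have h1 : (univ.filter fun ω : (Fin k × Fin l → Bool) => ∃! i, ω (t, i) = false).card
      = (univ.filter fun f : Fin k → Fin l → Bool => ∃! i, f t i = false).card :=
    by convert (card_filter_equiv ((Equiv.curry (Fin k) (Fin l) Bool).symm)
        (fun ω : (Fin k × Fin l → Bool) => ∃! i, ω (t, i) = false)).symm using 2 <;> congr!
  have h2 : (univ.filter fun f : Fin k → Fin l → Bool => ∃! i, f t i = false)
      = univ.filter fun f : Fin k → Fin l → Bool =>
          (∀ s, (fun _ : Fin l → Bool => True) (f s)) ∧ (∃! i, f t i = false) := by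
    apply Finset.filter_congr; intro f _; simp
  rw [h1, h2]
  rw [show (univ.filter fun f : Fin k → Fin l → Bool =>
        (∀ s, (fun _ : Fin l → Bool => True) (f s)) ∧ (∃! i, f t i = false)).card
      = (univ.filter fun v : Fin l → Bool => True ∧ ∃! i, v i = false).card *
        (univ.filter fun _ : Fin l → Bool => True).card ^ (k - 1) from by
    convert count_one_special t (fun v : Fin l → Bool => ∃! i, v i = false) (fun _ : Fin l → Bool => True) using 2 <;> congr!]
  have h3 : (univ.filter fun v : Fin l → Bool => True ∧ ∃! i, v i = false)
      = univ.filter fun v : Fin l → Bool => ∃! i, v i = false := by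
    apply Finset.filter_congr; intro v _; simp
  have h4 : (univ.filter fun _ : Fin l → Bool => True) = univ := by
    apply Finset.filter_true_of_mem; intro _ _; trivial
  rw [h3, h4, pv_card, card_univ]
  simp [pow_mul]

-- count of ω in B with pivotal tribe t
lemma count_pivB_t (k l : ℕ) (t : Fin k) :
    (univ.filter fun ω : (Fin k × Fin l → Bool) =>
        (∀ s : Fin k, ¬∀ i, ω (s, i) = true) ∧ (∃! i, ω (t, i) = false)).card
      = l * (2 ^ l - 1) ^ (k - 1) := by
  have h1 : (univ.filter fun ω : (Fin k × Fin l → Bool) =>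
        (∀ s : Fin k, ¬∀ i, ω (s, i) = true) ∧ (∃! i, ω (t, i) = false)).card
      = (univ.filter fun f : Fin k → Fin l → Bool =>
          (∀ s, ¬∀ i, f s i = true) ∧ (∃! i, f t i = false)).card :=
    by convert (card_filter_equiv ((Equiv.curry (Fin k) (Fin l) Bool).symm)
        (fun ω : (Fin k × Fin l → Bool) =>
          (∀ s : Fin k, ¬∀ i, ω (s, i) = true) ∧ (∃! i, ω (t, i) = false))).symm using 2 <;> congr!
  rw [h1]
  rw [show (univ.filter fun f : Fin k → Fin l → Bool =>
        (∀ s, ¬∀ i, f s i = true) ∧ (∃! i, f t i = false)).card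
      = (univ.filter fun v : Fin l → Bool => (¬∀ i, v i = true) ∧ ∃! i, v i = false).card *
        (univ.filter fun v : Fin l → Bool => ¬∀ i, v i = true).card ^ (k - 1) from by
    convert count_one_special t (fun v : Fin l → Bool => ∃! i, v i = false)
      (fun v : Fin l → Bool => ¬∀ i, v i = true) using 2 <;> congr!]
  have h3 : (univ.filter fun v : Fin l → Bool => (¬∀ i, v i = true) ∧ ∃! i, v i = false)
      = univ.filter fun v : Fin l → Bool => ∃! i, v i = false := by
    apply Finset.filter_congr; intro v _
    simp only [and_iff_right_iff_imp]
    exact pv_notAll v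
  rw [h3, pv_card, notAllT_card]

-- cardinality of the event B
lemma cardB (k l : ℕ) :
    (univ.filter fun ω : (Fin k × Fin l → Bool) => ∀ t : Fin k, ¬∀ i, ω (t, i) = true).card
      = (2 ^ l - 1) ^ k := by
  have h1 : (univ.filter fun ω : (Fin k × Fin l → Bool) => ∀ t : Fin k, ¬∀ i, ω (t, i) = true).card
      = (univ.filter fun f : Fin k → Fin l → Bool => ∀ t, ¬∀ i, f t i = true).card :=
    by convert (card_filter_equiv ((Equiv.curry (Fin k) (Fin l) Bool).symm)
        (fun ω : (Fin k × Fin l → Bool) => ∀ t : Fin k, ¬∀ i, ω (t, i) = true)).symm using 2 <;> congr!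
  rw [h1]
  rw [show (univ.filter fun f : Fin k → Fin l → Bool => ∀ t, ¬∀ i, f t i = true).card
      = ∏ _t : Fin k, (univ.filter fun v : Fin l → Bool => ¬∀ i, v i = true).card from by
    convert cardPi (fun (_ : Fin k) (v : Fin l → Bool) => ¬∀ i, v i = true) using 2 <;> congr!]
  rw [Finset.prod_congr rfl (fun s _ => notAllT_card l), Finset.prod_const, card_univ,
    Fintype.card_fin]

lemma pivCount_eq (k l : ℕ) (ω : Fin k × Fin l → Bool) :
    (univ.filter fun t : Fin k => ∃! i, ω (t, i) = false).card
      = ∑ t : Fin k, if (∃! i, ω (t, i) = false) then 1 else 0 := by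
  rw [Finset.card_filter]

lemma S_eq (k l : ℕ) :
    ∑ ω : (Fin k × Fin l → Bool),
        (univ.filter fun t : Fin k => ∃! i, ω (t, i) = false).card
      = k * (l * 2 ^ (l * (k - 1))) := by
  calc ∑ ω : (Fin k × Fin l → Bool),
        (univ.filter fun t : Fin k => ∃! i, ω (t, i) = false).card
      = ∑ ω : (Fin k × Fin l → Bool), ∑ t : Fin k,
          if (∃! i, ω (t, i) = false) then 1 else 0 :=
        Finset.sum_congr rfl fun ω _ => pivCount_eq k l ω
    _ = ∑ t : Fin k, ∑ ω : (Fin k × Fin l → Bool),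
          if (∃! i, ω (t, i) = false) then 1 else 0 := Finset.sum_comm
    _ = ∑ t : Fin k, (univ.filter fun ω : (Fin k × Fin l → Bool) =>
          ∃! i, ω (t, i) = false).card :=
        Finset.sum_congr rfl fun t _ => (Finset.card_filter _ _).symm
    _ = ∑ _t : Fin k, l * 2 ^ (l * (k - 1)) :=
        Finset.sum_congr rfl fun t _ => count_piv_t k l t
    _ = k * (l * 2 ^ (l * (k - 1))) := by
        rw [Finset.sum_const, card_univ, Fintype.card_fin, smul_eq_mul]

lemma SB_eq (k l : ℕ) :
    ∑ ω ∈ univ.filter (fun ω : (Fin k × Fin l → Bool) => ∀ t : Fin k, ¬∀ i, ω (t, i) = true),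
        (univ.filter fun t : Fin k => ∃! i, ω (t, i) = false).card
      = k * (l * (2 ^ l - 1) ^ (k - 1)) := by
  rw [Finset.sum_filter]
  calc ∑ ω : (Fin k × Fin l → Bool), (if (∀ t : Fin k, ¬∀ i, ω (t, i) = true)
        then (univ.filter fun t : Fin k => ∃! i, ω (t, i) = false).card else 0)
      = ∑ ω : (Fin k × Fin l → Bool), ∑ t : Fin k,
          (if ((∀ s : Fin k, ¬∀ i, ω (s, i) = true) ∧ ∃! i, ω (t, i) = false) then 1 else 0) := by
        refine Finset.sum_congr rfl fun ω _ => ?_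
        by_cases hP : ∀ s : Fin k, ¬∀ i, ω (s, i) = true
        · rw [if_pos hP, pivCount_eq k l ω]
          refine Finset.sum_congr rfl fun t _ => ?_
          by_cases hQ : ∃! i, ω (t, i) = false
          · rw [if_pos hQ, if_pos ⟨hP, hQ⟩]
          · rw [if_neg hQ, if_neg (fun h => hQ h.2)]
        · rw [if_neg hP]
          exact (Finset.sum_eq_zero fun t _ => if_neg fun h => hP h.1).symm
    _ = ∑ t : Fin k, ∑ ω : (Fin k × Fin l → Bool),
          (if ((∀ s : Fin k, ¬∀ i, ω (s, i) = true) ∧ ∃! i, ω (t, i) = false) then 1 else 0) :=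
        Finset.sum_comm
    _ = ∑ t : Fin k, (univ.filter fun ω : (Fin k × Fin l → Bool) =>
          (∀ s : Fin k, ¬∀ i, ω (s, i) = true) ∧ ∃! i, ω (t, i) = false).card :=
        Finset.sum_congr rfl fun t _ => (Finset.card_filter _ _).symm
    _ = ∑ _t : Fin k, l * (2 ^ l - 1) ^ (k - 1) :=
        Finset.sum_congr rfl fun t _ => count_pivB_t k l t
    _ = k * (l * (2 ^ l - 1) ^ (k - 1)) := by
        rw [Finset.sum_const, card_univ, Fintype.card_fin, smul_eq_mul]

lemma key_ineq (k l : ℕ) (hk : 0 < k) :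
    k * (l * 2 ^ (l * (k - 1))) * (2 ^ l - 1) ^ k
      ≤ k * (l * (2 ^ l - 1) ^ (k - 1)) * 2 ^ (k * l) := by
  obtain ⟨m, rfl⟩ : ∃ m, k = m + 1 := ⟨k - 1, by omega⟩
  simp only [Nat.add_sub_cancel]
  rw [pow_succ, show (m + 1) * l = l * m + l by ring, pow_add]
  calc (m+1) * (l * 2 ^ (l * m)) * ((2 ^ l - 1) ^ m * (2 ^ l - 1))
      = ((m+1) * l * 2 ^ (l * m) * (2 ^ l - 1) ^ m) * (2 ^ l - 1) := by ring
    _ ≤ ((m+1) * l * 2 ^ (l * m) * (2 ^ l - 1) ^ m) * 2 ^ l :=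
        Nat.mul_le_mul_left _ (Nat.sub_le _ _)
    _ = (m+1) * (l * (2 ^ l - 1) ^ m) * (2 ^ (l * m) * 2 ^ l) := by ring

lemma tribes_eq_one_iff (k l : ℕ) (ω : Cube (Fin k × Fin l)) :
    tribes k l ω = 1 ↔ ∃ t : Fin k, ∀ i, ω (t, i) = true := by
  unfold tribes; split <;> simp_all

lemma tribes_eq_zero_iff (k l : ℕ) (ω : Cube (Fin k × Fin l)) :
    tribes k l ω = 0 ↔ ∀ t : Fin k, ¬∀ i, ω (t, i) = true := by
  unfold tribes; split <;> simp_all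

lemma tribes_dichotomy (k l : ℕ) (ω : Cube (Fin k × Fin l)) :
    tribes k l ω = 0 ∨ tribes k l ω = 1 := by
  unfold tribes; split
  · right; rfl
  · left; rfl

lemma pivTribeCount_eq (k l : ℕ) (ω : Cube (Fin k × Fin l)) :
    pivTribeCount k l ω
      = (univ.filter fun t : Fin k => ∃! i, ω (t, i) = false).card := rfl

end stmt8aux


set_option maxHeartbeats 2000000 in
lemma stmt8_core (l k : ℕ) (hl : 2 ≤ l) (hk : 0 < k) :
    0 < unifProb (fun ω : Cube (Fin k × Fin l) => tribes k l ω = 1) ∧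
    0 < unifProb (fun ω : Cube (Fin k × Fin l) => tribes k l ω = 0) ∧
    condExpect (fun ω : Cube (Fin k × Fin l) => (pivTribeCount k l ω : ℝ))
        (fun ω => tribes k l ω = 1) ≤
      unifExp (fun ω : Cube (Fin k × Fin l) => (pivTribeCount k l ω : ℝ)) ∧
    unifExp (fun ω : Cube (Fin k × Fin l) => (pivTribeCount k l ω : ℝ)) ≤
      condExpect (fun ω : Cube (Fin k × Fin l) => (pivTribeCount k l ω : ℝ))
        (fun ω => tribes k l ω = 0) ∧
    unifExp (fun ω : Cube (Fin k × Fin l) => (pivTribeCount k l ω : ℝ)) =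
      (k : ℝ) * (l : ℝ) * (1 / 2 : ℝ) ^ l := by
  have hl0 : 0 < l := by omega
  -- filter identifications
  have hBfilter : (univ.filter fun ω : Cube (Fin k × Fin l) => tribes k l ω = 0)
      = univ.filter fun ω : Cube (Fin k × Fin l) => ∀ t : Fin k, ¬∀ i, ω (t, i) = true :=
    Finset.filter_congr fun ω _ => by rw [tribes_eq_zero_iff]
  -- cardinalities
  have hcardB : (univ.filter fun ω : Cube (Fin k × Fin l) => tribes k l ω = 0).card
      = (2 ^ l - 1) ^ k := by rw [hBfilter]; exact cardB k l
  have hN : Fintype.card (Cube (Fin k × Fin l)) = 2 ^ (k * l) := by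
    simp [Fintype.card_fun]
  have hNposR : (0 : ℝ) < (Fintype.card (Cube (Fin k × Fin l)) : ℝ) := by
    exact_mod_cast Fintype.card_pos
  -- witnesses
  have h1w : tribes k l (fun _ => true) = 1 :=
    (tribes_eq_one_iff k l _).mpr ⟨⟨0, hk⟩, fun _ => rfl⟩
  have h0w : tribes k l (fun _ => false) = 0 :=
    (tribes_eq_zero_iff k l _).mpr fun t h => Bool.noConfusion (h ⟨0, hl0⟩)
  have hApos : 0 < (univ.filter fun ω : Cube (Fin k × Fin l) => tribes k l ω = 1).card :=
    Finset.card_pos.mpr ⟨_, Finset.mem_filter.mpr ⟨Finset.mem_univ _, h1w⟩⟩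
  have hBpos : 0 < (univ.filter fun ω : Cube (Fin k × Fin l) => tribes k l ω = 0).card :=
    Finset.card_pos.mpr ⟨_, Finset.mem_filter.mpr ⟨Finset.mem_univ _, h0w⟩⟩
  have hAposR : (0 : ℝ) < ((univ.filter fun ω : Cube (Fin k × Fin l) => tribes k l ω = 1).card : ℝ) := by
    exact_mod_cast hApos
  have hBposR : (0 : ℝ) < ((univ.filter fun ω : Cube (Fin k × Fin l) => tribes k l ω = 0).card : ℝ) := by
    exact_mod_cast hBpos
  -- sums
  have hS : ∑ ω : Cube (Fin k × Fin l), ((pivTribeCount k l ω : ℝ))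
      = ((k * (l * 2 ^ (l * (k - 1))) : ℕ) : ℝ) := by
    rw [← Nat.cast_sum]
    exact_mod_cast congrArg (Nat.cast (R := ℝ))
      ((Finset.sum_congr rfl fun ω _ => pivTribeCount_eq k l ω).trans (S_eq k l))
  have hSB : ∑ ω ∈ univ.filter (fun ω : Cube (Fin k × Fin l) => tribes k l ω = 0),
        ((pivTribeCount k l ω : ℝ))
      = ((k * (l * (2 ^ l - 1) ^ (k - 1)) : ℕ) : ℝ) := by
    rw [← Nat.cast_sum]
    congr 1
    rw [hBfilter]
    exact (Finset.sum_congr rfl fun ω _ => pivTribeCount_eq k l ω).trans (SB_eq k l)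
  -- expectation value
  have hExp : unifExp (fun ω : Cube (Fin k × Fin l) => (pivTribeCount k l ω : ℝ))
      = (k : ℝ) * (l : ℝ) * (1 / 2 : ℝ) ^ l := by
    unfold unifExp
    rw [hS, hN]
    have hkl : k * l = l * (k - 1) + l := by
      obtain ⟨m, rfl⟩ : ∃ m, k = m + 1 := ⟨k - 1, by omega⟩
      simp [Nat.add_sub_cancel]; ring
    rw [hkl, pow_add]
    rw [div_eq_iff (by positivity)]
    push_cast
    rw [div_pow, one_pow]
    field_simp
  -- splitting identities
  have hAfilter : (univ.filter fun ω : Cube (Fin k × Fin l) => ¬tribes k l ω = 0)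
      = univ.filter fun ω : Cube (Fin k × Fin l) => tribes k l ω = 1 :=
    Finset.filter_congr fun ω _ => by
      rcases tribes_dichotomy k l ω with h | h <;> simp [h]
  have hsum_split : (∑ ω ∈ univ.filter (fun ω : Cube (Fin k × Fin l) => tribes k l ω = 0),
          ((pivTribeCount k l ω : ℝ)))
        + (∑ ω ∈ univ.filter (fun ω : Cube (Fin k × Fin l) => tribes k l ω = 1),
          ((pivTribeCount k l ω : ℝ)))
      = ∑ ω : Cube (Fin k × Fin l), ((pivTribeCount k l ω : ℝ)) := by
    rw [← hAfilter]
    exact Finset.sum_filter_add_sum_filter_not univ _ _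
  have hcard_split : ((univ.filter fun ω : Cube (Fin k × Fin l) => tribes k l ω = 0).card : ℝ)
        + ((univ.filter fun ω : Cube (Fin k × Fin l) => tribes k l ω = 1).card : ℝ)
      = (Fintype.card (Cube (Fin k × Fin l)) : ℝ) := by
    rw [← hAfilter]
    rw [← Finset.card_univ]
    exact_mod_cast Finset.card_filter_add_card_filter_not
      (fun ω : Cube (Fin k × Fin l) => tribes k l ω = 0)
  -- the key inequality over ℝ
  have hkey : ((k * (l * 2 ^ (l * (k - 1))) : ℕ) : ℝ) * (((2 ^ l - 1) ^ k : ℕ) : ℝ)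
      ≤ ((k * (l * (2 ^ l - 1) ^ (k - 1)) : ℕ) : ℝ) * ((2 ^ (k * l) : ℕ) : ℝ) := by
    exact_mod_cast key_ineq k l hk
  have hPA : unifProb (fun ω : Cube (Fin k × Fin l) => tribes k l ω = 1)
      = ((univ.filter fun ω : Cube (Fin k × Fin l) => tribes k l ω = 1).card : ℝ)
        / (Fintype.card (Cube (Fin k × Fin l)) : ℝ) := by
    unfold unifProb; congr!
  have hPB : unifProb (fun ω : Cube (Fin k × Fin l) => tribes k l ω = 0)
      = ((univ.filter fun ω : Cube (Fin k × Fin l) => tribes k l ω = 0).card : ℝ)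
        / (Fintype.card (Cube (Fin k × Fin l)) : ℝ) := by
    unfold unifProb; congr!
  have hUE : unifExp (fun ω : Cube (Fin k × Fin l) => (pivTribeCount k l ω : ℝ))
      = (∑ ω : Cube (Fin k × Fin l), ((pivTribeCount k l ω : ℝ)))
        / (Fintype.card (Cube (Fin k × Fin l)) : ℝ) := by
    unfold unifExp; congr!
  have hCE1 : condExpect (fun ω : Cube (Fin k × Fin l) => (pivTribeCount k l ω : ℝ))
        (fun ω => tribes k l ω = 1)
      = (∑ ω ∈ univ.filter (fun ω : Cube (Fin k × Fin l) => tribes k l ω = 1),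
          ((pivTribeCount k l ω : ℝ)))
        / ((univ.filter fun ω : Cube (Fin k × Fin l) => tribes k l ω = 1).card : ℝ) := by
    unfold condExpect; congr!
  have hCE0 : condExpect (fun ω : Cube (Fin k × Fin l) => (pivTribeCount k l ω : ℝ))
        (fun ω => tribes k l ω = 0)
      = (∑ ω ∈ univ.filter (fun ω : Cube (Fin k × Fin l) => tribes k l ω = 0),
          ((pivTribeCount k l ω : ℝ)))
        / ((univ.filter fun ω : Cube (Fin k × Fin l) => tribes k l ω = 0).card : ℝ) := by
    unfold condExpect; congr!
  have hNcast : (Fintype.card (Cube (Fin k × Fin l)) : ℝ) = ((2 ^ (k * l) : ℕ) : ℝ) := by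
    exact_mod_cast hN
  refine ⟨?_, ?_, ?_, ?_, hExp⟩
  · rw [hPA]
    exact div_pos hAposR hNposR
  · rw [hPB]
    exact div_pos hBposR hNposR
  · -- E[X | 1] ≤ E[X]
    rw [hCE1, hUE]
    rw [div_le_div_iff₀ hAposR hNposR]
    have e1 : (∑ ω ∈ univ.filter (fun ω : Cube (Fin k × Fin l) => tribes k l ω = 1),
          ((pivTribeCount k l ω : ℝ)))
        = ((k * (l * 2 ^ (l * (k - 1))) : ℕ) : ℝ)
          - ((k * (l * (2 ^ l - 1) ^ (k - 1)) : ℕ) : ℝ) := by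
      rw [← hS, ← hsum_split, hSB]; ring
    have e2 : ((univ.filter fun ω : Cube (Fin k × Fin l) => tribes k l ω = 1).card : ℝ)
        = ((2 ^ (k * l) : ℕ) : ℝ) - (((2 ^ l - 1) ^ k : ℕ) : ℝ) := by
      have h := hcard_split
      rw [hcardB, hN] at h
      push_cast at h ⊢
      linarith
    rw [e1, e2, hS, hNcast]
    nlinarith [hkey]
  · -- E[X] ≤ E[X | 0]
    rw [hCE0, hUE]
    rw [div_le_div_iff₀ hNposR hBposR]
    rw [hS, hSB, hcardB, hNcast]
    exact_mod_cast key_ineq k l hk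

/-- For `l ≥ 2` and `k ≥ 1`, the events `{Tribes = 1}` and `{Tribes = 0}`
have positive probability and, with `X` the number of pivotal tribes,
`𝔼[X | Tribes = 1] ≤ 𝔼[X] ≤ 𝔼[X | Tribes = 0]` where `𝔼[X] = k·l·2^{-l}`. -/
theorem stmt8 (l k : ℕ) (hl : 2 ≤ l) (hk : 0 < k) :
    0 < unifProb (fun ω : Cube (Fin k × Fin l) => tribes k l ω = 1) ∧
    0 < unifProb (fun ω : Cube (Fin k × Fin l) => tribes k l ω = 0) ∧
    condExpect (fun ω : Cube (Fin k × Fin l) => (pivTribeCount k l ω : ℝ))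
        (fun ω => tribes k l ω = 1) ≤
      unifExp (fun ω : Cube (Fin k × Fin l) => (pivTribeCount k l ω : ℝ)) ∧
    unifExp (fun ω : Cube (Fin k × Fin l) => (pivTribeCount k l ω : ℝ)) ≤
      condExpect (fun ω : Cube (Fin k × Fin l) => (pivTribeCount k l ω : ℝ))
        (fun ω => tribes k l ω = 0) ∧
    unifExp (fun ω : Cube (Fin k × Fin l) => (pivTribeCount k l ω : ℝ)) =
      (k : ℝ) * (l : ℝ) * (1 / 2 : ℝ) ^ l :=
  stmt8_core l k hl hk
end

section
/- Let (k_n) be a sequence of integers with k_n ≥ 2 and k_n → ∞, and set l_n = ⌈log₂ k_n + (1/2)·log₂ log₂ k_n⌉. Then k_n · 2^{−l_n} → 0 and k_n · l_n · 2^{−l_n} → ∞ as n → ∞; in particular (1 − 2^{−l_n})^{k_n} → 1. -/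
open Finset Filter

attribute [local instance] Classical.propDecidable

/-- If `k n ≥ 2`, `k n → ∞` and
`l n = ⌈log₂ (k n) + (1/2)·log₂ log₂ (k n)⌉`, then `k n · 2^{-l n} → 0` and
`k n · l n · 2^{-l n} → ∞`; in particular `(1 - 2^{-l n})^{k n} → 1`. -/
theorem stmt13 (k : ℕ → ℕ) (hk : ∀ n, 2 ≤ k n) (hk' : Tendsto k atTop atTop)
    (l : ℕ → ℕ)
    (hl : ∀ n, l n =
      ⌈Real.logb 2 (k n) + (1 / 2) * Real.logb 2 (Real.logb 2 (k n))⌉₊) :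
    Tendsto (fun n => (k n : ℝ) * (1 / 2 : ℝ) ^ l n) atTop (nhds 0) ∧
    Tendsto (fun n => (k n : ℝ) * (l n : ℝ) * (1 / 2 : ℝ) ^ l n) atTop atTop ∧
    Tendsto (fun n => (1 - (1 / 2 : ℝ) ^ l n) ^ k n) atTop (nhds 1) := by
  set c : ℕ → ℝ := fun n => Real.logb 2 (k n) with hc
  have hK2 : ∀ n, (2 : ℝ) ≤ (k n : ℝ) := fun n => by exact_mod_cast hk n
  have hKpos : ∀ n, (0 : ℝ) < (k n : ℝ) := fun n => lt_of_lt_of_le two_pos (hK2 n)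
  have hc1 : ∀ n, 1 ≤ c n := by
    intro n
    rw [hc]
    rw [Real.le_logb_iff_rpow_le one_lt_two (hKpos n), Real.rpow_one]
    exact hK2 n
  have hcpos : ∀ n, 0 < c n := fun n => lt_of_lt_of_le one_pos (hc1 n)
  have hsq1 : ∀ n, 1 ≤ Real.sqrt (c n) := fun n => by
    simpa using Real.sqrt_le_sqrt (hc1 n)
  have hsqpos : ∀ n, 0 < Real.sqrt (c n) := fun n => lt_of_lt_of_le one_pos (hsq1 n)
  have hx1 : ∀ n, c n ≤ c n + (1/2) * Real.logb 2 (c n) := by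
    intro n
    have : 0 ≤ Real.logb 2 (c n) := Real.logb_nonneg one_lt_two (hc1 n)
    linarith
  have hxpos : ∀ n, 0 ≤ c n + (1/2) * Real.logb 2 (c n) :=
    fun n => le_trans (hcpos n).le (hx1 n)
  have h2x : ∀ n, (2 : ℝ) ^ (c n + (1/2) * Real.logb 2 (c n)) =
      (k n : ℝ) * Real.sqrt (c n) := by
    intro n
    rw [Real.rpow_add two_pos, Real.rpow_logb two_pos (by norm_num) (hKpos n),
      mul_comm (1/2 : ℝ), Real.rpow_mul (by norm_num : (0:ℝ) ≤ 2),
      Real.rpow_logb two_pos (by norm_num) (hcpos n), ← Real.sqrt_eq_rpow]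
  have hlow : ∀ n, (k n : ℝ) * Real.sqrt (c n) ≤ (2 : ℝ) ^ (l n) := by
    intro n
    rw [← h2x n, ← Real.rpow_natCast 2 (l n)]
    exact (Real.rpow_le_rpow_left_iff one_lt_two).2 (by rw [hl n]; exact Nat.le_ceil _)
  have hup : ∀ n, (2 : ℝ) ^ (l n) ≤ 2 * ((k n : ℝ) * Real.sqrt (c n)) := by
    intro n
    have h1 : ((l n : ℝ)) ≤ (c n + (1/2) * Real.logb 2 (c n)) + 1 := by
      rw [hl n]
      exact le_of_lt (Nat.ceil_lt_add_one (hxpos n))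
    calc (2:ℝ) ^ (l n) = (2:ℝ) ^ ((l n : ℝ)) := (Real.rpow_natCast 2 (l n)).symm
      _ ≤ (2:ℝ) ^ ((c n + (1/2) * Real.logb 2 (c n)) + 1) :=
          Real.rpow_le_rpow_of_exponent_le one_le_two h1
      _ = 2 * ((k n : ℝ) * Real.sqrt (c n)) := by
          rw [Real.rpow_add two_pos, h2x n, Real.rpow_one]; ring
  have h2Lpos : ∀ n, (0:ℝ) < (2:ℝ) ^ (l n) := fun n => by positivity
  have hhalf : ∀ n, ((1/2 : ℝ)) ^ (l n) = ((2:ℝ) ^ (l n))⁻¹ := by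
    intro n; rw [one_div, inv_pow]
  -- bound 1
  have hb1 : ∀ n, (k n : ℝ) * (1/2:ℝ) ^ (l n) ≤ (Real.sqrt (c n))⁻¹ := by
    intro n
    rw [hhalf n, mul_inv_le_iff₀ (h2Lpos n)]
    calc (k n : ℝ) = (Real.sqrt (c n))⁻¹ * ((k n : ℝ) * Real.sqrt (c n)) := by
          rw [mul_comm, mul_assoc, mul_inv_cancel₀ (hsqpos n).ne', mul_one]
      _ ≤ (Real.sqrt (c n))⁻¹ * (2:ℝ) ^ (l n) :=
          mul_le_mul_of_nonneg_left (hlow n) (by positivity)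
  -- bound 2
  have hb2 : ∀ n, Real.sqrt (c n) / 2 ≤ (k n : ℝ) * (l n : ℝ) * (1/2:ℝ) ^ (l n) := by
    intro n
    rw [hhalf n]
    have hLc : c n ≤ (l n : ℝ) :=
      le_trans (hx1 n) (by rw [hl n]; exact Nat.le_ceil _)
    have hss : Real.sqrt (c n) * Real.sqrt (c n) = c n := Real.mul_self_sqrt (hcpos n).le
    have e1 : Real.sqrt (c n) / 2 = (k n : ℝ) * c n * (2 * ((k n : ℝ) * Real.sqrt (c n)))⁻¹ := by
      rw [← hss]
      field_simp [(hKpos n).ne', (hsqpos n).ne']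
      rw [Real.sqrt_sq (Real.sqrt_nonneg _)]
    rw [e1]
    have step1 : (k n : ℝ) * c n * (2 * ((k n : ℝ) * Real.sqrt (c n)))⁻¹ ≤
        (k n : ℝ) * (l n : ℝ) * (2 * ((k n : ℝ) * Real.sqrt (c n)))⁻¹ := by
      apply mul_le_mul_of_nonneg_right _ (by positivity)
      exact mul_le_mul_of_nonneg_left hLc (hKpos n).le
    refine step1.trans ?_
    apply mul_le_mul_of_nonneg_left _ (by positivity)
    exact inv_anti₀ (h2Lpos n) (hup n)
  -- limits
  have hctop : Tendsto c atTop atTop := by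
    rw [hc]
    exact (Real.tendsto_logb_atTop one_lt_two).comp
      (tendsto_natCast_atTop_atTop.comp hk')
  have hsqtop : Tendsto (fun n => Real.sqrt (c n)) atTop atTop := by
    have : Tendsto (fun x : ℝ => x ^ (1/2 : ℝ)) atTop atTop :=
      tendsto_rpow_atTop (by norm_num)
    refine (this.comp hctop).congr fun n => ?_
    simp [Real.sqrt_eq_rpow]
  have t1 : Tendsto (fun n => (k n : ℝ) * (1 / 2 : ℝ) ^ l n) atTop (nhds 0) := by
    refine squeeze_zero (fun n => by positivity) hb1 ?_
    exact tendsto_inv_atTop_zero.comp hsqtop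
  have t2 : Tendsto (fun n => (k n : ℝ) * (l n : ℝ) * (1 / 2 : ℝ) ^ l n) atTop atTop := by
    refine tendsto_atTop_mono hb2 ?_
    exact hsqtop.atTop_div_const two_pos
  refine ⟨t1, t2, ?_⟩
  have hxle1 : ∀ n, (1/2 : ℝ) ^ (l n) ≤ 1 := fun n =>
    pow_le_one₀ (by norm_num) (by norm_num)
  have lower : ∀ n, 1 - (k n : ℝ) * (1/2:ℝ) ^ (l n) ≤ (1 - (1/2:ℝ) ^ (l n)) ^ (k n) := by
    intro n
    have := one_add_mul_le_pow (a := -((1/2:ℝ) ^ (l n)))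
      (by nlinarith [hxle1 n]) (k n)
    calc 1 - (k n : ℝ) * (1/2:ℝ) ^ (l n) = 1 + (k n : ℝ) * (-((1/2:ℝ) ^ (l n))) := by ring
      _ ≤ (1 + -((1/2:ℝ) ^ (l n))) ^ (k n) := this
      _ = (1 - (1/2:ℝ) ^ (l n)) ^ (k n) := by ring_nf
  have upper : ∀ n, (1 - (1/2:ℝ) ^ (l n)) ^ (k n) ≤ 1 := by
    intro n
    apply pow_le_one₀
    · have : (0:ℝ) ≤ (1/2:ℝ) ^ (l n) := by positivity
      linarith [hxle1 n]
    · have : (0:ℝ) ≤ (1/2:ℝ) ^ (l n) := by positivity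
      linarith
  have hlower : Tendsto (fun n => 1 - (k n : ℝ) * (1/2:ℝ) ^ (l n)) atTop (nhds 1) := by
    have := (tendsto_const_nhds (x := (1:ℝ)) (f := atTop)).sub t1
    simpa using this
  exact tendsto_of_tendsto_of_tendsto_of_le_of_le hlower tendsto_const_nhds lower upper
end
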